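/- Let Q be the transition rate matrix of an irreducible CTMC on a countable state space admitting a norm-like Foster-Lyapunov function V ≥ 1 with ℚV ≤ C₁ − C₂V. Let (E_n) be an increasing sequence of finite subsets covering the state space, fix a designated state x_ℓ ∈ E₁, and let Q̄_n be obtained from the restriction of Q to E_n by redirecting outgoing transitions to x_ℓ. Then the unique stationary distribution π̄_n of Q̄_n converges to the stationary distribution π of Q in ℓ¹: lim_{n→∞} ‖π − π̄_n‖_{ℓ¹} = 0. -/

import Mathlib

open Filter Topology

private lemma summable_ite_compl {E : Type*} {g : E → ℝ} (hg : Summable g) (s : Finset E)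
    [DecidablePred (· ∈ s)] :
    Summable (fun y => if y ∈ s then 0 else g y) := by
  have h1 : Summable (fun y => if y ∈ s then g y else 0) :=
    summable_of_ne_finset_zero (s := s) (fun y hy => if_neg hy)
  have h : (fun y => if y ∈ s then 0 else g y)
      = fun y => g y - (if y ∈ s then g y else 0) := by
    funext y; by_cases h : y ∈ s <;> simp [h]
  rw [h]; exact hg.sub h1

private lemma tsum_split {E : Type*} {g : E → ℝ} (hg : Summable g) (s : Finset E)
    [DecidablePred (· ∈ s)] :
    ∑' y, g y = (∑ y ∈ s, g y) + ∑' y, (if y ∈ s then 0 else g y) := by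
  have h1 : Summable (fun y => if y ∈ s then g y else 0) :=
    summable_of_ne_finset_zero (s := s) (fun y hy => if_neg hy)
  have h2 : Summable (fun y => if y ∈ s then 0 else g y) := summable_ite_compl hg s
  have h3 : ∑' y, (if y ∈ s then g y else 0) = ∑ y ∈ s, g y := by
    rw [tsum_eq_sum (s := s) (fun y hy => if_neg hy)]
    exact Finset.sum_congr rfl (fun y hy => if_pos hy)
  calc ∑' y, g y = ∑' y, ((if y ∈ s then g y else 0) + (if y ∈ s then 0 else g y)) := by
        apply tsum_congr; intro y; by_cases h : y ∈ s <;> simp [h]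
    _ = _ := by rw [Summable.tsum_add h1 h2, h3]

/-- Any nonnegative summable subinvariant vector of `Q` is invariant, given the
Foster-Lyapunov drift condition. -/
private lemma balance {E : Type*} [DecidableEq E]
    (Q : E → E → ℝ) (hoff : ∀ x y, x ≠ y → 0 ≤ Q x y)
    (hQsum : ∀ x, Summable (Q x)) (hrow : ∀ x, ∑' y, Q x y = 0)
    (V : E → ℝ) (hV0 : ∀ x, 0 ≤ V x)
    (hnormlike : ∀ c : ℝ, {x : E | V x ≤ c}.Finite)
    (C₁ C₂ : ℝ) (hC₁ : 0 ≤ C₁) (hC₂ : 0 ≤ C₂)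
    (hQVsum : ∀ x, Summable fun y => Q x y * V y)
    (hdrift : ∀ x, ∑' y, Q x y * V y ≤ C₁ - C₂ * V x)
    (m : E → ℝ) (hm0 : ∀ x, 0 ≤ m x) (hmsum : Summable m)
    (hm1 : ∀ y, Summable fun x => Q x y * m x)
    (hm2 : ∀ y, ∑' x, Q x y * m x ≤ 0) :
    ∀ y, ∑' x, Q x y * m x = 0 := by
  classical
  intro y₀
  refine le_antisymm (hm2 y₀) ?_
  by_contra hcon
  push_neg at hcon
  set δ : ℝ := -∑' x, Q x y₀ * m x with hδ
  have hδpos : 0 < δ := by simp only [hδ]; linarith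
  set M : ℝ := ∑' x, m x with hM
  have hM0 : 0 ≤ M := tsum_nonneg hm0
  set R : ℝ := V y₀ + (C₁ * M + 1) / δ with hR
  have hRy₀ : V y₀ < R := by
    have : 0 < (C₁ * M + 1) / δ := by positivity
    simp only [hR]; linarith
  set F : Finset E := (hnormlike R).toFinset with hF
  have hmemF : ∀ y, y ∈ F ↔ V y ≤ R := by
    intro y; simp [hF, Set.Finite.mem_toFinset]
  set f : E → ℝ := fun y => max (R - V y) 0 with hf
  have hf0 : ∀ y, 0 ≤ f y := fun y => le_max_right _ _
  have hfF : ∀ y, y ∉ F → f y = 0 := by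
    intro y hy
    have : R < V y := by by_contra h; push_neg at h; exact hy ((hmemF y).mpr h)
    simp only [hf]; rw [max_eq_right]; linarith
  set g : E → ℝ := fun x => ∑ y ∈ F, f y * Q x y with hg
  -- lower bound on g
  have hglow : ∀ x, -C₁ ≤ g x := by
    intro x
    by_cases hx : V x ≤ R
    · have hgt : g x = ∑' y, f y * Q x y := by
        rw [tsum_eq_sum (s := F) (fun y hy => by rw [hfF y hy, zero_mul])]
      have s1 : Summable (fun y => (R - V y) * Q x y) := by
        have : (fun y => (R - V y) * Q x y) = fun y => R * Q x y - Q x y * V y := by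
          funext y; ring
        rw [this]; exact ((hQsum x).mul_left R).sub (hQVsum x)
      have sf : Summable (fun y => f y * Q x y) :=
        summable_of_ne_finset_zero (s := F) (fun y hy => by rw [hfF y hy, zero_mul])
      have s2 : Summable (fun y => max (V y - R) 0 * Q x y) := by
        have : (fun y => max (V y - R) 0 * Q x y)
            = fun y => f y * Q x y - (R - V y) * Q x y := by
          funext y; simp only [hf]
          rcases le_total (V y) R with h | h
          · have e1 : max (V y - R) 0 = 0 := max_eq_right (by linarith)
            have e2 : max (R - V y) 0 = R - V y := max_eq_left (by linarith)
            rw [e1, e2]; ring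
          · have e1 : max (V y - R) 0 = V y - R := max_eq_left (by linarith)
            have e2 : max (R - V y) 0 = 0 := max_eq_right (by linarith)
            rw [e1, e2]; ring
        rw [this]; exact sf.sub s1
      have hsplit : ∑' y, f y * Q x y
          = (∑' y, (R - V y) * Q x y) + ∑' y, max (V y - R) 0 * Q x y := by
        rw [← Summable.tsum_add s1 s2]
        apply tsum_congr; intro y
        simp only [hf]
        rcases le_total (V y) R with h | h
        · have e1 : max (V y - R) 0 = 0 := max_eq_right (by linarith)
          have e2 : max (R - V y) 0 = R - V y := max_eq_left (by linarith)
          rw [e1, e2]; ring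
        · have e1 : max (V y - R) 0 = V y - R := max_eq_left (by linarith)
          have e2 : max (R - V y) 0 = 0 := max_eq_right (by linarith)
          rw [e1, e2]; ring
      have h1 : ∑' y, (R - V y) * Q x y = - ∑' y, Q x y * V y := by
        have : (fun y => (R - V y) * Q x y) = fun y => R * Q x y - Q x y * V y := by
          funext y; ring
        rw [this, Summable.tsum_sub ((hQsum x).mul_left R) (hQVsum x), tsum_mul_left, hrow x]
        ring
      have h2 : 0 ≤ ∑' y, max (V y - R) 0 * Q x y := by
        apply tsum_nonneg; intro y
        rcases eq_or_ne y x with rfl | hne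
        · rw [max_eq_right (by linarith)]; simp
        · exact mul_nonneg (le_max_right _ _) (hoff x y (Ne.symm hne))
      have hd := hdrift x
      have : C₂ * V x - C₁ ≤ g x := by
        rw [hgt, hsplit, h1]; linarith
      nlinarith [mul_nonneg hC₂ (hV0 x)]
    · have : 0 ≤ g x := by
        apply Finset.sum_nonneg; intro y hy
        have hyx : y ≠ x := by
          intro h; subst h; exact hx ((hmemF y).mp hy)
        exact mul_nonneg (hf0 y) (hoff x y (Ne.symm hyx))
      linarith
  -- swap
  have hmg_eq : ∀ x, m x * g x = ∑ y ∈ F, f y * (Q x y * m x) := by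
    intro x; simp only [hg]; rw [Finset.mul_sum]
    exact Finset.sum_congr rfl fun y _ => by ring
  have hmg_summable : Summable (fun x => m x * g x) := by
    have : (fun x => m x * g x) = fun x => ∑ y ∈ F, f y * (Q x y * m x) := funext hmg_eq
    rw [this]
    exact summable_sum fun y _ => (hm1 y).mul_left (f y)
  have hswap : ∑' x, m x * g x = ∑ y ∈ F, f y * ∑' x, Q x y * m x := by
    calc ∑' x, m x * g x = ∑' x, ∑ y ∈ F, f y * (Q x y * m x) := tsum_congr hmg_eq
      _ = ∑ y ∈ F, ∑' x, f y * (Q x y * m x) :=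
          Summable.tsum_finsetSum fun y _ => (hm1 y).mul_left (f y)
      _ = ∑ y ∈ F, f y * ∑' x, Q x y * m x := by
          exact Finset.sum_congr rfl fun y _ => tsum_mul_left
  have hlowtot : -C₁ * M ≤ ∑' x, m x * g x := by
    simp only [hM]
    rw [← tsum_mul_left]
    apply Summable.tsum_le_tsum _ (hmsum.mul_left (-C₁)) hmg_summable
    intro x
    calc -C₁ * m x = m x * (-C₁) := by ring
      _ ≤ m x * g x := mul_le_mul_of_nonneg_left (hglow x) (hm0 x)
  have hy₀F : y₀ ∈ F := (hmemF y₀).mpr (le_of_lt hRy₀)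
  have hup : ∑ y ∈ F, f y * ∑' x, Q x y * m x ≤ f y₀ * ∑' x, Q x y₀ * m x := by
    rw [← Finset.add_sum_erase F _ hy₀F]
    have : ∑ y ∈ F.erase y₀, f y * ∑' x, Q x y * m x ≤ 0 := by
      apply Finset.sum_nonpos; intro y _
      exact mul_nonpos_of_nonneg_of_nonpos (hf0 y) (hm2 y)
    linarith
  have hfy₀ : f y₀ = (C₁ * M + 1) / δ := by
    simp only [hf]; rw [max_eq_left (by linarith)]; simp only [hR]; ring
  have hval : f y₀ * ∑' x, Q x y₀ * m x = -(C₁ * M + 1) := by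
    have : ∑' x, Q x y₀ * m x = -δ := by simp only [hδ]; ring
    rw [hfy₀, this]
    have hδne : δ ≠ 0 := ne_of_gt hδpos
    field_simp
  have hfin : -C₁ * M ≤ -(C₁ * M + 1) := by
    rw [← hval]
    exact le_trans hlowtot (le_of_eq_of_le hswap hup)
  linarith

/-- sFSP convergence (Theorem 3.1(B)): for an irreducible CTMC on a countable state
space with transition rate matrix `Q` admitting a norm-like Foster–Lyapunov function
`V ≥ 1` with `ℚV ≤ C₁ − C₂V`, if `(E_n)` is an increasing sequence of finite
truncations covering the state space, `x_ℓ ∈ E₁` a designated state, and `π̄_n` the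
stationary distribution of the projected chain `Q̄_n` obtained by redirecting all
outgoing transitions of `E_n` to `x_ℓ`, then `‖π − π̄_n‖_{ℓ¹} → 0`. -/
theorem sFSP_l1_convergence {E : Type*} [Countable E] [DecidableEq E]
    (Q : E → E → ℝ)
    (hoff : ∀ x y, x ≠ y → 0 ≤ Q x y)
    (hdiag : ∀ x, Q x x ≤ 0)
    (hQsum : ∀ x, Summable (Q x))
    (hrow : ∀ x, ∑' y, Q x y = 0)
    (hirr : ∀ x y : E, Relation.ReflTransGen (fun a b => a ≠ b ∧ 0 < Q a b) x y)
    (V : E → ℝ) (hV1 : ∀ x, 1 ≤ V x)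
    (hnormlike : ∀ c : ℝ, {x : E | V x ≤ c}.Finite)
    (C₁ C₂ : ℝ) (hC₁ : 0 < C₁) (hC₂ : 0 < C₂)
    (hQVsum : ∀ x, Summable fun y => Q x y * V y)
    (hdrift : ∀ x, ∑' y, Q x y * V y ≤ C₁ - C₂ * V x)
    -- the stationary distribution of the original chain
    (π : E → ℝ) (hπpos : ∀ x, 0 ≤ π x) (hπsum : Summable π) (hπ1 : ∑' x, π x = 1)
    (hπQsum : ∀ y, Summable fun x => Q x y * π x)
    (hπstat : ∀ y, ∑' x, Q x y * π x = 0)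
    -- the increasing family of finite truncations and the designated state
    (En : ℕ → Finset E) (hmono : Monotone En) (hcover : ∀ x : E, ∃ n, x ∈ En n)
    (xl : E) (hxl : xl ∈ En 0)
    -- stationary distributions of the projected chains `Q̄_n`
    (πbar : ℕ → E → ℝ)
    (hπbar_supp : ∀ n x, x ∉ En n → πbar n x = 0)
    (hπbar_pos : ∀ n x, 0 ≤ πbar n x)
    (hπbar_1 : ∀ n, ∑ x ∈ En n, πbar n x = 1)
    (hπbar_stat : ∀ n, ∀ y ∈ En n,
      ∑ x ∈ En n,
        (Q x y + (if y = xl then ∑' z, (if z ∈ En n then 0 else Q x z) else 0)) *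
          πbar n x = 0) :
    Filter.Tendsto (fun n => ∑' x, |π x - πbar n x|) Filter.atTop (nhds 0) := by
    classical
  set C : ℝ := C₁ / C₂ with hCdef
  have hCpos : 0 < C := div_pos hC₁ hC₂
  have hxl' : ∀ n, xl ∈ En n := fun n => hmono (Nat.zero_le n) hxl
  -- `N₀`: all states with small Lyapunov value are in `En N₀`
  obtain ⟨N₀, hN₀⟩ : ∃ N₀ : ℕ, ∀ z : E, V z ≤ V xl → z ∈ En N₀ := by
    have hfin := hnormlike (V xl)
    choose idx hidx using hcover
    refine ⟨hfin.toFinset.sup idx, fun z hz => ?_⟩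
    exact hmono (Finset.le_sup (hfin.mem_toFinset.mpr hz)) (hidx z)
  -- Step 1 : uniform moment bound
  have moment : ∀ n, N₀ ≤ n → ∑ x ∈ En n, πbar n x * V x ≤ C := by
    intro n hn
    set T : E → ℝ := fun x => ∑' z, (if z ∈ En n then 0 else Q x z) with hT
    have key : ∀ x ∈ En n,
        ∑ y ∈ En n, V y * ((Q x y + (if y = xl then T x else 0)) * πbar n x)
          = πbar n x * ((∑ y ∈ En n, Q x y * V y) + V xl * T x) := by
      intro x _
      have h1 : ∀ y ∈ En n, V y * ((Q x y + (if y = xl then T x else 0)) * πbar n x)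
          = Q x y * V y * πbar n x + (if y = xl then V y * T x * πbar n x else 0) := by
        intro y _
        by_cases h : y = xl <;> simp [h] <;> ring
      rw [Finset.sum_congr rfl h1, Finset.sum_add_distrib, Finset.sum_ite_eq' (En n) xl
        (fun y => V y * T x * πbar n x), if_pos (hxl' n), ← Finset.sum_mul]
      ring
    have hzero : ∑ x ∈ En n, πbar n x * ((∑ y ∈ En n, Q x y * V y) + V xl * T x) = 0 := by
      have h0 : ∑ y ∈ En n, ∑ x ∈ En n,
          V y * ((Q x y + (if y = xl then T x else 0)) * πbar n x) = 0 := by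
        refine Finset.sum_eq_zero fun y hy => ?_
        rw [← Finset.mul_sum]
        rw [hπbar_stat n y hy, mul_zero]
      rw [Finset.sum_comm] at h0
      rw [← h0]
      exact (Finset.sum_congr rfl key).symm
    have hDle : ∀ x ∈ En n,
        (∑ y ∈ En n, Q x y * V y) + V xl * T x ≤ C₁ - C₂ * V x := by
      intro x hx
      have hsplit := tsum_split (hQVsum x) (En n)
      have e1 : ∀ y, (if y ∈ En n then 0 else Q x y * (V y - V xl))
          = (if y ∈ En n then 0 else Q x y * V y)
            - V xl * (if y ∈ En n then 0 else Q x y) := by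
        intro y; by_cases h : y ∈ En n
        · simp [h]
        · simp only [if_neg h]; ring
      have hsub : ∑' y, (if y ∈ En n then 0 else Q x y * (V y - V xl))
          = (∑' y, (if y ∈ En n then 0 else Q x y * V y))
            - V xl * ∑' y, (if y ∈ En n then 0 else Q x y) := by
        rw [tsum_congr e1, Summable.tsum_sub (summable_ite_compl (hQVsum x) (En n))
          ((summable_ite_compl (hQsum x) (En n)).mul_left (V xl)), tsum_mul_left]
      have hpos : 0 ≤ ∑' y, (if y ∈ En n then 0 else Q x y * (V y - V xl)) := by
        apply tsum_nonneg; intro y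
        by_cases h : y ∈ En n
        · simp [h]
        · simp only [if_neg h]
          have hyx : x ≠ y := fun hxy => h (hxy ▸ hx)
          have hVy : V xl ≤ V y := by
            by_contra hVY; push_neg at hVY
            exact h (hmono hn (hN₀ y (le_of_lt hVY)))
          exact mul_nonneg (hoff x y hyx) (by linarith)
      have hd := hdrift x
      -- (∑_{En} Q x y V y) = ∑' QV − ∑' ite QV  and T x = ∑' ite Q
      have : (∑ y ∈ En n, Q x y * V y) + V xl * T x
          = (∑' y, Q x y * V y)
            - ∑' y, (if y ∈ En n then 0 else Q x y * (V y - V xl)) := by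
        rw [hsub, hT]; linarith [hsplit]
      linarith
    have hfinal : 0 ≤ C₁ - C₂ * ∑ x ∈ En n, πbar n x * V x := by
      have h1 : (0:ℝ) ≤ ∑ x ∈ En n, πbar n x * (C₁ - C₂ * V x) := by
        rw [← hzero]
        exact Finset.sum_le_sum fun x hx =>
          mul_le_mul_of_nonneg_left (hDle x hx) (hπbar_pos n x)
      have h2 : ∑ x ∈ En n, πbar n x * (C₁ - C₂ * V x)
          = C₁ * (∑ x ∈ En n, πbar n x) - C₂ * ∑ x ∈ En n, πbar n x * V x := by
        rw [Finset.mul_sum, Finset.mul_sum, ← Finset.sum_sub_distrib]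
        exact Finset.sum_congr rfl fun x _ => by ring
      rw [h2, hπbar_1 n] at h1; linarith
    rw [hCdef, le_div_iff₀ hC₂]; linarith
  -- tail bound for πbar
  have tailb : ∀ n, N₀ ≤ n → ∀ R : ℝ, 0 < R → ∀ G : Finset E,
      (∀ x ∈ G, R ≤ V x) → ∑ x ∈ G, πbar n x ≤ C / R := by
    intro n hn R hR G hG
    have h1 : ∑ x ∈ G, πbar n x * V x ≤ C := by
      have e : ∑ x ∈ G, πbar n x * V x = ∑ x ∈ G ∩ En n, πbar n x * V x := by
        refine (Finset.sum_subset Finset.inter_subset_left fun x hx hx' => ?_).symm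
        have : x ∉ En n := fun h => hx' (Finset.mem_inter.mpr ⟨hx, h⟩)
        rw [hπbar_supp n x this, zero_mul]
      rw [e]
      refine le_trans (Finset.sum_le_sum_of_subset_of_nonneg Finset.inter_subset_right
        fun x _ _ => mul_nonneg (hπbar_pos n x) (by linarith [hV1 x])) (moment n hn)
    have h2 : R * ∑ x ∈ G, πbar n x ≤ ∑ x ∈ G, πbar n x * V x := by
      rw [Finset.mul_sum]
      refine Finset.sum_le_sum fun x hx => ?_
      calc R * πbar n x ≤ V x * πbar n x :=
            mul_le_mul_of_nonneg_right (hG x hx) (hπbar_pos n x)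
        _ = πbar n x * V x := mul_comm _ _
    rw [le_div_iff₀ hR]; linarith
  have hπbar_le1 : ∀ n x, πbar n x ≤ 1 := by
    intro n x
    by_cases hx : x ∈ En n
    · rw [← hπbar_1 n]
      exact Finset.single_le_sum (fun y _ => hπbar_pos n y) hx
    · rw [hπbar_supp n x hx]; exact zero_le_one
  -- prelimit subinvariance inequality
  have presub : ∀ n y, y ∈ En n → ∀ F : Finset E,
      ∑ x ∈ F, (if x = y then 0 else Q x y * πbar n x) ≤ (-Q y y) * πbar n y := by
    intro n y hy F
    have hstat := hπbar_stat n y hy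
    have hsum_split : ∑ x ∈ En n, (Q x y + (if y = xl then
        ∑' z, (if z ∈ En n then 0 else Q x z) else 0)) * πbar n x
        = (∑ x ∈ En n, Q x y * πbar n x)
          + ∑ x ∈ En n, (if y = xl then ∑' z, (if z ∈ En n then 0 else Q x z) else 0)
              * πbar n x := by
      rw [← Finset.sum_add_distrib]
      exact Finset.sum_congr rfl fun x _ => by ring
    have hred : 0 ≤ ∑ x ∈ En n, (if y = xl then
        ∑' z, (if z ∈ En n then 0 else Q x z) else 0) * πbar n x := by
      refine Finset.sum_nonneg fun x hx => ?_
      refine mul_nonneg ?_ (hπbar_pos n x)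
      by_cases h : y = xl
      · rw [if_pos h]
        refine tsum_nonneg fun z => ?_
        by_cases hz : z ∈ En n
        · simp [hz]
        · rw [if_neg hz]
          exact hoff x z fun hxz => hz (hxz ▸ hx)
      · rw [if_neg h]
    have h1 : ∑ x ∈ En n, Q x y * πbar n x ≤ 0 := by
      rw [hsum_split] at hstat; linarith
    have h2 : ∑ x ∈ En n, Q x y * πbar n x
        = Q y y * πbar n y + ∑ x ∈ (En n).erase y, Q x y * πbar n x := by
      rw [Finset.add_sum_erase (En n) (fun x => Q x y * πbar n x) hy]
    have h3 : ∑ x ∈ F, (if x = y then 0 else Q x y * πbar n x)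
        ≤ ∑ x ∈ (En n).erase y, Q x y * πbar n x := by
      have e0 : ∑ x ∈ F, (if x = y then 0 else Q x y * πbar n x)
          = ∑ x ∈ F.erase y, Q x y * πbar n x := by
        rw [← Finset.sum_erase (s := F)
          (f := fun x => if x = y then 0 else Q x y * πbar n x) (if_pos rfl)]
        exact Finset.sum_congr rfl fun x hx => if_neg (Finset.ne_of_mem_erase hx)
      have e1 : ∑ x ∈ F.erase y, Q x y * πbar n x
          = ∑ x ∈ (F.erase y) ∩ En n, Q x y * πbar n x := by
        refine (Finset.sum_subset Finset.inter_subset_left fun x hx hx' => ?_).symm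
        have : x ∉ En n := fun h => hx' (Finset.mem_inter.mpr ⟨hx, h⟩)
        rw [hπbar_supp n x this, mul_zero]
      have e2 : (F.erase y) ∩ En n ⊆ (En n).erase y := by
        intro x hx
        rcases Finset.mem_inter.mp hx with ⟨hx1, hx2⟩
        exact Finset.mem_erase.mpr ⟨Finset.ne_of_mem_erase hx1, hx2⟩
      rw [e0, e1]
      refine Finset.sum_le_sum_of_subset_of_nonneg e2 fun x hx _ => ?_
      exact mul_nonneg (hoff x y (Finset.ne_of_mem_erase hx)) (hπbar_pos n x)
    calc ∑ x ∈ F, (if x = y then 0 else Q x y * πbar n x)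
        ≤ ∑ x ∈ (En n).erase y, Q x y * πbar n x := h3
      _ ≤ -Q y y * πbar n y := by linarith
  -- finite-sum moment bound
  have momF : ∀ n, N₀ ≤ n → ∀ F : Finset E, ∑ x ∈ F, πbar n x * V x ≤ C := by
    intro n hn F
    have e : ∑ x ∈ F, πbar n x * V x = ∑ x ∈ F ∩ En n, πbar n x * V x := by
      refine (Finset.sum_subset Finset.inter_subset_left fun x hx hx' => ?_).symm
      have : x ∉ En n := fun h => hx' (Finset.mem_inter.mpr ⟨hx, h⟩)
      rw [hπbar_supp n x this, zero_mul]
    rw [e]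
    refine le_trans (Finset.sum_le_sum_of_subset_of_nonneg Finset.inter_subset_right
      fun x _ _ => mul_nonneg (hπbar_pos n x) (by linarith [hV1 x])) (moment n hn)
  have sum_le_one : ∀ (n : ℕ) (F : Finset E), ∑ x ∈ F, πbar n x ≤ 1 := by
    intro n F
    have e : ∑ x ∈ F, πbar n x = ∑ x ∈ F ∩ En n, πbar n x := by
      refine (Finset.sum_subset Finset.inter_subset_left fun x hx hx' => ?_).symm
      exact hπbar_supp n x (fun h => hx' (Finset.mem_inter.mpr ⟨hx, h⟩))
    rw [e, ← hπbar_1 n]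
    exact Finset.sum_le_sum_of_subset_of_nonneg Finset.inter_subset_right
      fun x _ _ => hπbar_pos n x
  -- pass to a pointwise convergent subsequence
  apply Filter.tendsto_of_subseq_tendsto
  intro ns hns
  have hS : IsCompact (Set.pi Set.univ fun _ : E => Set.Icc (0:ℝ) 1) :=
    isCompact_univ_pi fun _ => isCompact_Icc
  have hmem : ∀ k, (fun x => πbar (ns k) x) ∈ Set.pi Set.univ fun _ : E =>
      Set.Icc (0:ℝ) 1 := fun k x _ => ⟨hπbar_pos _ x, hπbar_le1 _ x⟩
  obtain ⟨μ, hμS, φ, hφmono, hφtend⟩ := hS.isSeqCompact hmem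
  refine ⟨φ, ?_⟩
  set N : ℕ → ℕ := fun k => ns (φ k) with hNdef
  have hNtend : Filter.Tendsto N Filter.atTop Filter.atTop :=
    hns.comp hφmono.tendsto_atTop
  have hptw : ∀ x, Filter.Tendsto (fun k => πbar (N k) x) Filter.atTop (nhds (μ x)) :=
    fun x => tendsto_pi_nhds.mp hφtend x
  have hμ0 : ∀ x, 0 ≤ μ x := fun x => (hμS x (Set.mem_univ x)).1
  -- finite sums converge
  have hFsum : ∀ F : Finset E, Filter.Tendsto (fun k => ∑ x ∈ F, πbar (N k) x)
      Filter.atTop (nhds (∑ x ∈ F, μ x)) :=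
    fun F => tendsto_finset_sum F fun x _ => hptw x
  -- μ has bounded V-moment on finite sets
  have hμmomF : ∀ F : Finset E, ∑ x ∈ F, μ x * V x ≤ C := by
    intro F
    have htends : Filter.Tendsto (fun k => ∑ x ∈ F, πbar (N k) x * V x)
        Filter.atTop (nhds (∑ x ∈ F, μ x * V x)) :=
      tendsto_finset_sum F fun x _ => (hptw x).mul_const (V x)
    refine le_of_tendsto htends ?_
    filter_upwards [hNtend.eventually_ge_atTop N₀] with k hk
    exact momF (N k) hk F
  have hμVsum : Summable (fun x => μ x * V x) :=
    summable_of_sum_le (fun x => mul_nonneg (hμ0 x) (by linarith [hV1 x])) hμmomF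
  have hμsum : Summable μ := by
    refine Summable.of_nonneg_of_le hμ0 (fun x => ?_) hμVsum
    nlinarith [hμ0 x, hV1 x]
  have hμF_le1 : ∀ F : Finset E, ∑ x ∈ F, μ x ≤ 1 := by
    intro F
    refine le_of_tendsto (hFsum F) ?_
    exact Filter.Eventually.of_forall fun k => sum_le_one (N k) F
  -- total mass of μ is 1
  have hμ1 : ∑' x, μ x = 1 := by
    have hle : ∑' x, μ x ≤ 1 := Summable.tsum_le_of_sum_le hμsum hμF_le1
    have hge : ∀ R : ℝ, 0 < R → 1 - C / R ≤ ∑' x, μ x := by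
      intro R hR
      set FR : Finset E := (hnormlike R).toFinset with hFRdef
      have hpre : ∀ k, N₀ ≤ N k → 1 - C / R ≤ ∑ x ∈ FR, πbar (N k) x := by
        intro k hk
        have hsplit : ∑ x ∈ En (N k) ∩ FR, πbar (N k) x
            + ∑ x ∈ En (N k) \ FR, πbar (N k) x = 1 := by
          rw [Finset.sum_inter_add_sum_sdiff]; exact hπbar_1 (N k)
        have htail : ∑ x ∈ En (N k) \ FR, πbar (N k) x ≤ C / R := by
          refine tailb (N k) hk R hR _ fun x hx => ?_
          have : x ∉ FR := (Finset.mem_sdiff.mp hx).2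
          have : ¬ V x ≤ R := fun h => this ((hnormlike R).mem_toFinset.mpr h)
          linarith [not_le.mp this]
        have hsub : ∑ x ∈ En (N k) ∩ FR, πbar (N k) x ≤ ∑ x ∈ FR, πbar (N k) x :=
          Finset.sum_le_sum_of_subset_of_nonneg Finset.inter_subset_right
            fun x _ _ => hπbar_pos (N k) x
        linarith
      have hlim : 1 - C / R ≤ ∑ x ∈ FR, μ x := by
        refine ge_of_tendsto (hFsum FR) ?_
        filter_upwards [hNtend.eventually_ge_atTop N₀] with k hk
        exact hpre k hk
      exact le_trans hlim (Summable.sum_le_tsum FR (fun x _ => hμ0 x) hμsum)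
    have : ∀ ε : ℝ, 0 < ε → 1 ≤ ∑' x, μ x + ε := by
      intro ε hε
      have hR : (0:ℝ) < C / ε := div_pos hCpos hε
      have := hge (C / ε) hR
      have hCR : C / (C / ε) = ε := by
        field_simp
      rw [hCR] at this; linarith
    have h1le : (1:ℝ) ≤ ∑' x, μ x := le_of_forall_pos_le_add this
    linarith
  -- helper : remove single point summability
  have summable_ite_ne : ∀ (f : E → ℝ) (y : E), Summable f →
      Summable (fun x => if x = y then 0 else f x) := by
    intro f y hf
    have h1 : Summable (fun x => if x = y then f x else 0) :=
      summable_of_ne_finset_zero (s := {y}) fun x hx =>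
        if_neg (by simpa using hx)
    have e : (fun x => if x = y then 0 else f x) = fun x => f x - if x = y then f x else 0 := by
      funext x; by_cases h : x = y <;> simp [h]
    rw [e]; exact hf.sub h1
  -- subinvariance of μ
  have hμsub' : ∀ y : E, Summable (fun x => if x = y then 0 else Q x y * μ x)
      ∧ ∑' x, (if x = y then 0 else Q x y * μ x) ≤ (-Q y y) * μ y := by
    intro y
    obtain ⟨ny, hny⟩ := hcover y
    have hFle : ∀ F : Finset E, ∑ x ∈ F, (if x = y then 0 else Q x y * μ x)
        ≤ (-Q y y) * μ y := by
      intro F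
      have hL : Filter.Tendsto (fun k => ∑ x ∈ F, (if x = y then 0 else Q x y * πbar (N k) x))
          Filter.atTop (nhds (∑ x ∈ F, (if x = y then 0 else Q x y * μ x))) := by
        refine tendsto_finset_sum F fun x _ => ?_
        by_cases h : x = y
        · simp only [if_pos h]; exact tendsto_const_nhds
        · simp only [if_neg h]; exact (hptw x).const_mul (Q x y)
      have hrhs : Filter.Tendsto (fun k => (-Q y y) * πbar (N k) y)
          Filter.atTop (nhds ((-Q y y) * μ y)) := (hptw y).const_mul _
      refine le_of_tendsto_of_tendsto hL hrhs ?_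
      filter_upwards [hNtend.eventually_ge_atTop ny] with k hk
      exact presub (N k) y (hmono hk hny) F
    have hnn : ∀ x, 0 ≤ (if x = y then 0 else Q x y * μ x) := by
      intro x; by_cases h : x = y
      · simp [h]
      · simp only [if_neg h]; exact mul_nonneg (hoff x y h) (hμ0 x)
    exact ⟨summable_of_sum_le hnn hFle, Summable.tsum_le_of_sum_le (summable_of_sum_le hnn hFle) hFle⟩
  have hμQsum : ∀ y, Summable fun x => Q x y * μ x := by
    intro y
    have h1 : Summable (fun x => if x = y then Q x y * μ x else 0) :=
      summable_of_ne_finset_zero (s := {y}) fun x hx => if_neg (by simpa using hx)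
    have e : (fun x => Q x y * μ x)
        = fun x => (if x = y then Q x y * μ x else 0) + (if x = y then 0 else Q x y * μ x) := by
      funext x; by_cases h : x = y <;> simp [h]
    rw [e]; exact h1.add (hμsub' y).1
  have hμsub : ∀ y, ∑' x, Q x y * μ x ≤ 0 := by
    intro y
    rw [Summable.tsum_eq_add_tsum_ite (hμQsum y) y]
    have := (hμsub' y).2
    linarith
  -- μ is invariant
  have hV0 : ∀ x, (0:ℝ) ≤ V x := fun x => le_trans zero_le_one (hV1 x)
  have hμbal : ∀ y, ∑' x, Q x y * μ x = 0 :=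
    balance Q hoff hQsum hrow V hV0 hnormlike C₁ C₂ hC₁.le hC₂.le hQVsum hdrift
      μ hμ0 hμsum hμQsum hμsub
  -- rearranged invariance identities
  have hμid : ∀ y, ∑' x, (if x = y then 0 else Q x y * μ x) = (-Q y y) * μ y := by
    intro y
    have := hμbal y
    rw [Summable.tsum_eq_add_tsum_ite (hμQsum y) y] at this
    linarith
  have hπid : ∀ y, ∑' x, (if x = y then 0 else Q x y * π x) = (-Q y y) * π y := by
    intro y
    have := hπstat y
    rw [Summable.tsum_eq_add_tsum_ite (hπQsum y) y] at this
    linarith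
  -- the pointwise minimum of μ and π
  set w : E → ℝ := fun x => min (μ x) (π x) with hwdef
  have hw0 : ∀ x, 0 ≤ w x := fun x => le_min (hμ0 x) (hπpos x)
  have hwleμ : ∀ x, w x ≤ μ x := fun x => min_le_left _ _
  have hwleπ : ∀ x, w x ≤ π x := fun x => min_le_right _ _
  have hwsum : Summable w := Summable.of_nonneg_of_le hw0 hwleπ hπsum
  have hwQsum : ∀ y, Summable fun x => Q x y * w x := by
    intro y
    rw [← summable_abs_iff]
    refine Summable.of_nonneg_of_le (fun x => abs_nonneg _) (fun x => ?_) (hπQsum y).abs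
    rw [abs_mul, abs_mul]
    refine mul_le_mul_of_nonneg_left ?_ (abs_nonneg _)
    rw [abs_of_nonneg (hw0 x), abs_of_nonneg (hπpos x)]
    exact hwleπ x
  have hwite : ∀ y, Summable (fun x => if x = y then 0 else Q x y * w x) :=
    fun y => summable_ite_ne _ y (hwQsum y)
  have hμite : ∀ y, Summable (fun x => if x = y then 0 else Q x y * μ x) :=
    fun y => (hμsub' y).1
  have hπite : ∀ y, Summable (fun x => if x = y then 0 else Q x y * π x) :=
    fun y => summable_ite_ne _ y (hπQsum y)
  have hwsub : ∀ y, ∑' x, Q x y * w x ≤ 0 := by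
    intro y
    have hle1 : ∑' x, (if x = y then 0 else Q x y * w x) ≤ (-Q y y) * μ y := by
      rw [← hμid y]
      refine Summable.tsum_le_tsum (fun x => ?_) (hwite y) (hμite y)
      by_cases h : x = y
      · simp [h]
      · simp only [if_neg h]
        exact mul_le_mul_of_nonneg_left (hwleμ x) (hoff x y h)
    have hle2 : ∑' x, (if x = y then 0 else Q x y * w x) ≤ (-Q y y) * π y := by
      rw [← hπid y]
      refine Summable.tsum_le_tsum (fun x => ?_) (hwite y) (hπite y)
      by_cases h : x = y
      · simp [h]
      · simp only [if_neg h]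
        exact mul_le_mul_of_nonneg_left (hwleπ x) (hoff x y h)
    have hmin : ∑' x, (if x = y then 0 else Q x y * w x) ≤ (-Q y y) * w y := by
      have : (-Q y y) * w y = min ((-Q y y) * μ y) ((-Q y y) * π y) := by
        simp only [hwdef]
        exact mul_min_of_nonneg (μ y) (π y) (neg_nonneg.mpr (hdiag y))
      rw [this]
      exact le_min hle1 hle2
    rw [Summable.tsum_eq_add_tsum_ite (hwQsum y) y]
    linarith
  have hwbal : ∀ y, ∑' x, Q x y * w x = 0 :=
    balance Q hoff hQsum hrow V hV0 hnormlike C₁ C₂ hC₁.le hC₂.le hQVsum hdrift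
      w hw0 hwsum hwQsum hwsub
  have hwid : ∀ y, ∑' x, (if x = y then 0 else Q x y * w x) = (-Q y y) * w y := by
    intro y
    have := hwbal y
    rw [Summable.tsum_eq_add_tsum_ite (hwQsum y) y] at this
    linarith
  -- rigidity : the set {π < μ} is closed under transitions
  have hforward : ∀ a b : E, (a ≠ b ∧ 0 < Q a b) → π a < μ a → π b < μ b := by
    intro a b ⟨hab, hQab⟩ ha
    by_contra hb
    push_neg at hb
    have hwb : w b = μ b := min_eq_left hb
    have hwa : w a = π a := min_eq_right (le_of_lt ha)
    have hdiff : ∑' x, (if x = b then 0 else Q x b * (μ x - w x)) = 0 := by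
      have e : (fun x => if x = b then 0 else Q x b * (μ x - w x))
          = fun x => (if x = b then 0 else Q x b * μ x)
            - (if x = b then 0 else Q x b * w x) := by
        funext x; by_cases h : x = b
        · simp [h]
        · simp only [if_neg h]; ring
      rw [e, Summable.tsum_sub (hμite b) (hwite b), hμid b, hwid b, hwb]
      ring
    have hnn : ∀ x, 0 ≤ (if x = b then 0 else Q x b * (μ x - w x)) := by
      intro x; by_cases h : x = b
      · simp [h]
      · simp only [if_neg h]
        exact mul_nonneg (hoff x b h) (by linarith [hwleμ x])
    have hsummable : Summable (fun x => if x = b then 0 else Q x b * (μ x - w x)) := by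
      have e : (fun x => if x = b then 0 else Q x b * (μ x - w x))
          = fun x => (if x = b then 0 else Q x b * μ x)
            - (if x = b then 0 else Q x b * w x) := by
        funext x; by_cases h : x = b
        · simp [h]
        · simp only [if_neg h]; ring
      rw [e]; exact (hμite b).sub (hwite b)
    have hterm : (if a = b then 0 else Q a b * (μ a - w a)) ≤ 0 := by
      have h := Summable.le_tsum hsummable a fun x _ => hnn x
      rw [hdiff] at h
      exact h
    rw [if_neg hab, hwa] at hterm
    nlinarith
  have hall : ∀ a, π a < μ a → ∀ b, π b < μ b := by
    intro a ha b
    have h := hirr a b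
    induction h with
    | refl => exact ha
    | tail _ hstep ih => exact hforward _ _ hstep ih
  -- conclude μ = π
  have hμπ : ∀ x, μ x = π x := by
    have hle : ∀ x, μ x ≤ π x := by
      by_contra hcon
      push_neg at hcon
      obtain ⟨a, ha⟩ := hcon
      have hstrict : ∀ b, π b < μ b := hall a ha
      have hsub : Summable (fun x => μ x - π x) := hμsum.sub hπsum
      have h0 : ∑' x, (μ x - π x) = 0 := by
        rw [Summable.tsum_sub hμsum hπsum, hμ1, hπ1]; ring
      have := Summable.le_tsum hsub a fun x _ => by linarith [hstrict x]
      rw [h0] at this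
      linarith [hstrict a]
    intro x
    have hsub : Summable (fun x => π x - μ x) := hπsum.sub hμsum
    have h0 : ∑' x, (π x - μ x) = 0 := by
      rw [Summable.tsum_sub hπsum hμsum, hμ1, hπ1]; ring
    have := Summable.le_tsum hsub x fun z _ => by linarith [hle z]
    rw [h0] at this
    linarith [hle x]
  -- Scheffé argument: pointwise convergence + uniform tails give ℓ¹ convergence
  have hπbar_summable : ∀ n, Summable (πbar n) :=
    fun n => summable_of_ne_finset_zero (s := En n) (hπbar_supp n)
  have habs_summable : ∀ n, Summable (fun x => |π x - πbar n x|) := by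
    intro n
    refine Summable.of_nonneg_of_le (fun x => abs_nonneg _) (fun x => ?_)
      (hπsum.add (hπbar_summable n))
    calc |π x - πbar n x| ≤ |π x| + |πbar n x| := abs_sub _ _
      _ = π x + πbar n x := by
          rw [abs_of_nonneg (hπpos x), abs_of_nonneg (hπbar_pos n x)]
  rw [Metric.tendsto_atTop]
  intro ε hε
  set R : ℝ := 4 * C / ε with hRdef
  have hRpos : 0 < R := by positivity
  have hCR : C / R = ε / 4 := by
    rw [hRdef]
    field_simp
  -- tail of π
  obtain ⟨F₀, hF₀⟩ : ∃ F₀ : Finset E, ∑' x, (if x ∈ F₀ then 0 else π x) < ε / 4 := by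
    have hhs := hπsum.hasSum
    have : ∀ᶠ F : Finset E in Filter.atTop, 1 - ε / 4 < ∑ x ∈ F, π x := by
      refine hhs.eventually ?_
      have h14 : 1 - ε / 4 < ∑' x, π x := by rw [hπ1]; linarith
      exact eventually_gt_nhds h14
    obtain ⟨F₀, hF₀⟩ := this.exists
    refine ⟨F₀, ?_⟩
    have hsplit := tsum_split hπsum F₀
    rw [hπ1] at hsplit
    linarith
  set F : Finset E := F₀ ∪ (hnormlike R).toFinset with hFdef
  have hτπ : ∑' x, (if x ∈ F then 0 else π x) < ε / 4 := by
    refine lt_of_le_of_lt ?_ hF₀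
    refine Summable.tsum_le_tsum (fun x => ?_) (summable_ite_compl hπsum F)
      (summable_ite_compl hπsum F₀)
    by_cases h : x ∈ F
    · simp only [if_pos h]
      by_cases h0 : x ∈ F₀
      · simp [h0]
      · simp only [if_neg h0]; exact hπpos x
    · have h0 : x ∉ F₀ := fun hx => h (Finset.mem_union_left _ hx)
      simp [h, h0]
  -- eventual bounds
  have hev1 : ∀ᶠ k in Filter.atTop, N₀ ≤ N k := hNtend.eventually_ge_atTop N₀
  have hev2 : ∀ᶠ k in Filter.atTop, ∑ x ∈ F, |π x - πbar (N k) x| < ε / 4 := by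
    have hlim : Filter.Tendsto (fun k => ∑ x ∈ F, |π x - πbar (N k) x|)
        Filter.atTop (nhds 0) := by
      have h0 : (0:ℝ) = ∑ x ∈ F, |π x - μ x| := by
        refine (Finset.sum_eq_zero fun x _ => ?_).symm
        rw [← hμπ x]
        simp
      rw [h0]
      exact tendsto_finset_sum F fun x _ => (tendsto_const_nhds.sub (hptw x)).abs
    exact hlim.eventually (eventually_lt_nhds (by linarith))
  obtain ⟨K, hK⟩ := Filter.eventually_atTop.mp (hev1.and hev2)
  refine ⟨K, fun k hk => ?_⟩
  obtain ⟨hk1, hk2⟩ := hK k hk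
  have htail : ∑' x, (if x ∈ F then 0 else |π x - πbar (N k) x|) ≤ ε / 4 + ε / 4 := by
    have hb : ∑' x, (if x ∈ F then 0 else |π x - πbar (N k) x|)
        ≤ ∑' x, ((if x ∈ F then 0 else π x) + (if x ∈ F then 0 else πbar (N k) x)) := by
      refine Summable.tsum_le_tsum (fun x => ?_)
        (summable_ite_compl (habs_summable (N k)) F)
        ((summable_ite_compl hπsum F).add (summable_ite_compl (hπbar_summable (N k)) F))
      by_cases h : x ∈ F
      · simp [h]
      · simp only [if_neg h]
        calc |π x - πbar (N k) x| ≤ |π x| + |πbar (N k) x| := abs_sub _ _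
          _ = π x + πbar (N k) x := by
              rw [abs_of_nonneg (hπpos x), abs_of_nonneg (hπbar_pos (N k) x)]
    rw [Summable.tsum_add (summable_ite_compl hπsum F)
      (summable_ite_compl (hπbar_summable (N k)) F)] at hb
    have hbar : ∑' x, (if x ∈ F then 0 else πbar (N k) x) ≤ ε / 4 := by
      have he : ∑' x, (if x ∈ F then 0 else πbar (N k) x)
          = ∑ x ∈ En (N k) \ F, (if x ∈ F then 0 else πbar (N k) x) := by
        refine tsum_eq_sum fun x hx => ?_
        by_cases h : x ∈ F
        · simp [h]
        · simp only [if_neg h]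
          refine hπbar_supp (N k) x fun hEn => hx (Finset.mem_sdiff.mpr ⟨hEn, h⟩)
      have he2 : ∑ x ∈ En (N k) \ F, (if x ∈ F then 0 else πbar (N k) x)
          = ∑ x ∈ En (N k) \ F, πbar (N k) x := by
        refine Finset.sum_congr rfl fun x hx => ?_
        rw [if_neg (Finset.mem_sdiff.mp hx).2]
      rw [he, he2, ← hCR]
      refine tailb (N k) hk1 R hRpos _ fun x hx => ?_
      have hxF : x ∉ F := (Finset.mem_sdiff.mp hx).2
      have : x ∉ (hnormlike R).toFinset := fun h => hxF (Finset.mem_union_right _ h)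
      have : ¬ V x ≤ R := fun h => this ((hnormlike R).mem_toFinset.mpr h)
      linarith [not_le.mp this]
    linarith
  have hsplit := tsum_split (habs_summable (N k)) F
  have hnn : 0 ≤ ∑' x, |π x - πbar (N k) x| := tsum_nonneg fun x => abs_nonneg _
  rw [Real.dist_eq, sub_zero, abs_of_nonneg hnn]
  calc ∑' x, |π x - πbar (N k) x|
      = (∑ x ∈ F, |π x - πbar (N k) x|)
        + ∑' x, (if x ∈ F then 0 else |π x - πbar (N k) x|) := hsplit
    _ < ε / 4 + (ε / 4 + ε / 4) := by linarith
    _ < ε := by linarith
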